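/- Gauss' identity: the generating function of triangular numbers satisfies ∑_{n≥0} q^{n(n+1)/2} = ∏_{n≥1} (1-q^{2n})^2 / (1-q^n), as an identity of formal power series in q. -/

import Mathlib

open PowerSeries Finset

/-- The generating function `Δ(q) = ∑_{n≥0} q^{n(n+1)/2}` of triangular numbers. -/
noncomputable def triangularGF : PowerSeries ℚ :=
  PowerSeries.mk fun N => (((Finset.range (N + 1)).filter fun n => n * (n + 1) = 2 * N).card : ℚ)

local notation "PS" => PowerSeries ℚ


/-- Triangular numbers. -/
def tnum : ℕ → ℕ
  | 0 => 0
  | (r+1) => tnum r + (r+1)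

@[simp] lemma tnum_zero : tnum 0 = 0 := rfl

lemma tnum_succ (r : ℕ) : tnum (r+1) = tnum r + (r+1) := rfl

lemma two_tnum (r : ℕ) : 2 * tnum r = r * (r + 1) := by
  induction r with
  | zero => rfl
  | succ r ih => simp only [tnum]; ring_nf; ring_nf at ih; nlinarith [ih]

lemma tnum_strictMono : StrictMono tnum := by
  apply strictMono_nat_of_lt_succ
  intro n; simp only [tnum]; omega

lemma self_le_tnum (r : ℕ) : r ≤ tnum r := by
  induction r with
  | zero => omega
  | succ r ih => rw [tnum_succ]; omega

/-- Gaussian binomial coefficients (times nothing), defined by the q-Pascal recursion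
`qb x (K+1) (m+1) = qb x K (m+1) + x^(K-m) * qb x K m`. -/
def qb {R : Type*} [CommRing R] (x : R) : ℕ → ℕ → R
  | 0, 0 => 1
  | 0, (_+1) => 0
  | (_+1), 0 => 1
  | (K+1), (m+1) => qb x K (m+1) + x ^ (K - m) * qb x K m

section qb
variable {R S : Type*} [CommRing R] [CommRing S] (x : R)

lemma qb_zero_right (K : ℕ) : qb x K 0 = 1 := by cases K <;> rfl

lemma qb_of_lt : ∀ {K m : ℕ}, K < m → qb x K m = 0 := by
  intro K
  induction K with
  | zero => intro m h; match m, h with | (m+1), _ => rfl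
  | succ K ih =>
    intro m h
    match m, h with
    | (m+1), h =>
      show qb x K (m+1) + x ^ (K - m) * qb x K m = 0
      rw [ih (by omega), ih (by omega), mul_zero, add_zero]

lemma qb_diag : ∀ K : ℕ, qb x K K = 1 := by
  intro K
  induction K with
  | zero => rfl
  | succ K ih =>
    show qb x K (K+1) + x ^ (K - K) * qb x K K = 1
    rw [qb_of_lt x (by omega), ih]; simp

lemma map_qb (f : R →+* S) : ∀ K m : ℕ, f (qb x K m) = qb (f x) K m := by
  intro K
  induction K with
  | zero => intro m; cases m <;> simp [qb]
  | succ K ih =>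
    intro m
    cases m with
    | zero => simp [qb_zero_right]
    | succ m =>
      show f (qb x K (m+1) + x ^ (K - m) * qb x K m) = _
      rw [map_add, map_mul, map_pow, ih, ih]; rfl
end qb

section cauchy
variable {R : Type*} [CommRing R] (x w : R)

lemma cauchy : ∀ K : ℕ,
    ∏ i ∈ range K, (1 + w * x ^ (i+1))
      = ∑ m ∈ range (K+1), qb x K m * x ^ tnum m * w ^ m := by
  intro K
  induction K with
  | zero => simp [qb]
  | succ K ih =>
    rw [prod_range_succ, ih]
    have hsplit : ∑ m ∈ range (K+2), qb x (K+1) m * x ^ tnum m * w ^ m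
        = (∑ m ∈ range (K+1), qb x K (m+1) * x ^ tnum (m+1) * w ^ (m+1))
          + ((∑ m ∈ range (K+1), x ^ (K-m) * qb x K m * x ^ tnum (m+1) * w ^ (m+1)) + 1) := by
      rw [Finset.sum_range_succ' (fun m => qb x (K+1) m * x ^ tnum m * w ^ m) (K+1)]
      have : ∀ m ∈ range (K+1),
          qb x (K+1) (m+1) * x ^ tnum (m+1) * w ^ (m+1)
            = qb x K (m+1) * x ^ tnum (m+1) * w ^ (m+1)
              + x ^ (K-m) * qb x K m * x ^ tnum (m+1) * w ^ (m+1) := by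
        intro m _
        show (qb x K (m+1) + x ^ (K - m) * qb x K m) * x ^ tnum (m+1) * w ^ (m+1) = _
        ring
      rw [Finset.sum_congr rfl this, Finset.sum_add_distrib]
      simp [qb_zero_right, add_assoc, tnum_zero]
    rw [hsplit]
    have h1 : ∑ m ∈ range (K+1), qb x K (m+1) * x ^ tnum (m+1) * w ^ (m+1)
        = (∑ m ∈ range (K+1), qb x K m * x ^ tnum m * w ^ m) - 1 := by
      rw [Finset.sum_range_succ]
      rw [qb_of_lt x (by omega)]
      rw [eq_sub_iff_add_eq]
      rw [Finset.sum_range_succ' (fun m => qb x K m * x ^ tnum m * w ^ m) K]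
      simp [qb_zero_right, tnum_zero]
    have h2 : ∑ m ∈ range (K+1), x ^ (K-m) * qb x K m * x ^ tnum (m+1) * w ^ (m+1)
        = (∑ m ∈ range (K+1), qb x K m * x ^ tnum m * w ^ m) * (w * x ^ (K+1)) := by
      rw [Finset.sum_mul]
      apply Finset.sum_congr rfl
      intro m hm
      have hmK : m ≤ K := by simpa using Nat.lt_succ_iff.mp (Finset.mem_range.mp hm)
      have hx : x ^ (K - m) * x ^ tnum (m+1) = x ^ tnum m * x ^ (K+1) := by
        rw [← pow_add, ← pow_add]
        congr 1
        show K - m + (tnum m + (m+1)) = tnum m + (K+1)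
        omega
      calc x ^ (K-m) * qb x K m * x ^ tnum (m+1) * w ^ (m+1)
          = qb x K m * (x ^ (K-m) * x ^ tnum (m+1)) * (w ^ m * w) := by ring
        _ = qb x K m * (x ^ tnum m * x ^ (K+1)) * (w ^ m * w) := by rw [hx]
        _ = qb x K m * x ^ tnum m * w ^ m * (w * x ^ (K+1)) := by ring
    rw [h1, h2]
    ring

lemma qb_mul : ∀ K m : ℕ, m ≤ K →
    qb x K m * (∏ i ∈ range m, (1 - x ^ (i+1))) * (∏ i ∈ range (K-m), (1 - x ^ (i+1)))
      = ∏ i ∈ range K, (1 - x ^ (i+1)) := by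
  intro K
  induction K with
  | zero => intro m hm; interval_cases m; simp [qb]
  | succ K ih =>
    intro m hm
    cases m with
    | zero => simp [qb_zero_right]
    | succ m =>
      rcases Nat.lt_or_ge m K with hlt | hge
      · -- m+1 ≤ K
        have ih1 := ih (m+1) (by omega)
        have ih2 := ih m (by omega)
        have he : K - (m+1) + 1 = K - m := by omega
        have e1 : K + 1 - (m+1) = K - m := by omega
        have hx : x ^ (K - m) * x ^ (m+1) = x ^ (K+1) := by
          rw [← pow_add]; congr 1; omega
        have expand1 : ∏ i ∈ range (K - m), (1 - x ^ (i+1))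
            = (∏ i ∈ range (K - (m+1)), (1 - x ^ (i+1))) * (1 - x ^ (K - m)) := by
          rw [← he, prod_range_succ]
        have expand2 : ∏ i ∈ range (m+1), (1 - x ^ (i+1))
            = (∏ i ∈ range m, (1 - x ^ (i+1))) * (1 - x ^ (m+1)) := by
          rw [prod_range_succ]
        rw [expand2] at ih1
        rw [expand1] at ih2
        rw [e1, expand2, expand1]
        show (qb x K (m+1) + x ^ (K - m) * qb x K m) * _ * _ = _
        rw [prod_range_succ (fun i => 1 - x ^ (i+1)) K]
        linear_combination (1 - x ^ (K - m)) * ih1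
          + x ^ (K - m) * (1 - x ^ (m+1)) * ih2
          - (∏ i ∈ range K, (1 - x ^ (i+1))) * hx
      · -- m = K, i.e. m+1 = K+1
        have : m = K := by omega
        subst this
        show (qb x m (m+1) + x ^ (m - m) * qb x m m) * _ * _ = _
        rw [qb_of_lt x (by omega), qb_diag]
        simp
end cauchy

/-- `tri n j` is the triangular number `T_{j-n}`, where for `j < n` we interpret
`T_{-r} = T_{r-1}`. -/
def tri (n j : ℕ) : ℕ := if n ≤ j then tnum (j - n) else tnum (n - j - 1)

lemma tri_add (n j : ℕ) : tri (n+1) j + (n+1) * j = tnum j + tnum n := by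
  rcases le_or_gt (n+1) j with h | h
  · obtain ⟨k, rfl⟩ := Nat.exists_eq_add_of_le h
    have e : tri (n+1) (n+1+k) = tnum k := by simp [tri]
    rw [e]
    have h1 := two_tnum k
    have h2 := two_tnum (n+1+k)
    have h3 := two_tnum n
    nlinarith [h1, h2, h3]
  · have hj : j ≤ n := by omega
    obtain ⟨d, rfl⟩ := Nat.exists_eq_add_of_le hj
    have e : tri (j+d+1) j = tnum d := by
      simp only [tri, if_neg (by omega : ¬ j+d+1 ≤ j)]
      congr 1; omega
    rw [e]
    have h1 := two_tnum d
    have h2 := two_tnum j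
    have h3 := two_tnum (j+d)
    nlinarith [h1, h2, h3]

lemma tnum_eq_sum (n : ℕ) : tnum n = ∑ i ∈ range (n+1), i := by
  induction n with
  | zero => simp
  | succ n ih => rw [Finset.sum_range_succ, ← ih, tnum_succ]

section PI

/-- The finite Jacobi-type product identity obtained from the Cauchy binomial theorem
by substituting `w = X⁻ⁿ` in the fraction field. -/
lemma PI (n : ℕ) :
    ∑ j ∈ range (2*(n+1)+1), (X : PS) ^ (tri (n+1) j) * qb X (2*(n+1)) j
      = (∏ i ∈ range (n+1), (1 + (X : PS) ^ (i+1)))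
        * (∏ i ∈ range (n+1), (1 + (X : PS) ^ i)) := by
  set F := FractionRing PS
  apply IsFractionRing.injective PS F
  set φ := algebraMap PS F with hφ
  set t : F := φ X with htdef
  have ht : t ≠ 0 := by
    simpa [htdef] using
      fun h => PowerSeries.X_ne_zero ((IsFractionRing.injective PS F) (h.trans (map_zero φ).symm))
  have hinv : t * t⁻¹ = 1 := mul_inv_cancel₀ ht
  have hct : ∀ a b : ℕ, t ^ (a + b) * (t⁻¹) ^ b = t ^ a := by
    intro a b
    rw [pow_add, mul_assoc, ← mul_pow, hinv, one_pow, mul_one]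
  have key := cauchy t ((t⁻¹) ^ (n+1)) (2*(n+1))
  -- multiply key by t ^ tnum n
  have lhs_eq : φ (∑ j ∈ range (2*(n+1)+1), (X : PS) ^ (tri (n+1) j) * qb X (2*(n+1)) j)
      = t ^ tnum n
        * ∑ m ∈ range (2*(n+1)+1), qb t (2*(n+1)) m * t ^ tnum m * ((t⁻¹) ^ (n+1)) ^ m := by
    rw [map_sum, Finset.mul_sum]
    apply Finset.sum_congr rfl
    intro j hj
    rw [map_mul, map_pow, map_qb]
    have e1 : ((t⁻¹) ^ (n+1)) ^ j = (t⁻¹) ^ ((n+1)*j) := by rw [← pow_mul]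
    have e2 : t ^ tnum n * (qb t (2*(n+1)) j * t ^ tnum j * (t⁻¹) ^ ((n+1)*j))
        = qb t (2*(n+1)) j * (t ^ (tnum n + tnum j) * (t⁻¹) ^ ((n+1)*j)) := by
      rw [pow_add]; ring
    have e3 : tnum n + tnum j = tri (n+1) j + (n+1)*j := by
      have := tri_add n j; omega
    rw [e1, e2, e3, hct]
    ring
  rw [lhs_eq, ← key]
  -- now the product side
  rw [map_mul, map_prod, map_prod]
  have hsplit : ∏ i ∈ range (2*(n+1)), (1 + (t⁻¹) ^ (n+1) * t ^ (i+1))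
      = (∏ i ∈ range (n+1), (1 + (t⁻¹) ^ (n+1) * t ^ (i+1)))
        * ∏ i ∈ range (n+1), (1 + (t⁻¹) ^ (n+1) * t ^ ((n+1)+i+1)) := by
    have : 2*(n+1) = (n+1) + (n+1) := by ring
    rw [this, Finset.prod_range_add]
  rw [hsplit]
  have h2 : ∀ i ∈ range (n+1), (1 + (t⁻¹) ^ (n+1) * t ^ ((n+1)+i+1)) = 1 + t ^ (i+1) := by
    intro i _
    have : t ^ ((n+1)+i+1) * (t⁻¹) ^ (n+1) = t ^ (i+1) := by
      have e : (n+1)+i+1 = (i+1) + (n+1) := by ring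
      rw [e, hct]
    rw [mul_comm ((t⁻¹) ^ (n+1)), this]
  rw [Finset.prod_congr rfl h2]
  have h3 : t ^ tnum n * ∏ i ∈ range (n+1), (1 + (t⁻¹) ^ (n+1) * t ^ (i+1))
      = ∏ i ∈ range (n+1), (1 + t ^ i) := by
    have ht' : t ^ tnum n = ∏ i ∈ range (n+1), t ^ (n - i) := by
      have hsum : ∑ i ∈ range (n+1), (n - i) = tnum n := by
        rw [tnum_eq_sum]
        exact Finset.sum_range_reflect (fun i => i) (n+1)
      rw [← hsum]
      exact (Finset.prod_pow_eq_pow_sum (range (n+1)) (fun i => n - i) t).symm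
    rw [ht', ← Finset.prod_mul_distrib]
    have h4 : ∀ i ∈ range (n+1), t ^ (n - i) * (1 + (t⁻¹) ^ (n+1) * t ^ (i+1))
        = 1 + t ^ (n - i) := by
      intro i hi
      have hi' : i ≤ n := by simpa using Nat.lt_succ_iff.mp (Finset.mem_range.mp hi)
      have e : (n - i) + (i + 1) = n + 1 := by omega
      have : t ^ (n-i) * ((t⁻¹) ^ (n+1) * t ^ (i+1))
          = t ^ ((n-i) + (i+1)) * (t⁻¹) ^ (n+1) := by rw [pow_add]; ring
      have hone : t ^ (n+1) * (t⁻¹) ^ (n+1) = 1 := by simpa using hct 0 (n+1)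
      rw [mul_add, mul_one, this, e, hone]
      ring
    rw [Finset.prod_congr rfl h4]
    rw [← Finset.prod_range_reflect (fun i => 1 + t ^ i) (n+1)]
    apply Finset.prod_congr rfl
    intro i _
    norm_num
  calc t ^ tnum n * ((∏ i ∈ range (n+1), (1 + (t⁻¹) ^ (n+1) * t ^ (i+1)))
          * ∏ i ∈ range (n+1), (1 + t ^ (i+1)))
      = (t ^ tnum n * ∏ i ∈ range (n+1), (1 + (t⁻¹) ^ (n+1) * t ^ (i+1)))
          * ∏ i ∈ range (n+1), (1 + t ^ (i+1)) := by ring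
    _ = (∏ i ∈ range (n+1), (1 + t ^ i)) * ∏ i ∈ range (n+1), (1 + t ^ (i+1)) := by rw [h3]
    _ = _ := by
        rw [mul_comm]
        congr 1 <;> (apply Finset.prod_congr rfl; intro i _; simp [htdef, map_pow])

section Congruences

/-- Truncated product `(q;q)_a`. -/
noncomputable def Ap (a : ℕ) : PS := ∏ i ∈ range a, (1 - X ^ (i+1))
/-- Truncated product `(-q;q)_a`. -/
noncomputable def Bp (a : ℕ) : PS := ∏ i ∈ range a, (1 + X ^ (i+1))
/-- Truncated product `(q²;q²)_a`. -/
noncomputable def Cp (a : ℕ) : PS := ∏ i ∈ range a, (1 - X ^ (2*(i+1)))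

lemma constantCoeff_Ap (a : ℕ) : constantCoeff (Ap a) = 1 := by
  rw [Ap, map_prod]
  rw [Finset.prod_congr rfl (fun i _ => ?_), Finset.prod_const_one]
  rw [map_sub, map_one, map_pow, constantCoeff_X]
  simp

lemma isUnit_Ap (a : ℕ) : IsUnit (Ap a) := by
  rw [PowerSeries.isUnit_iff_constantCoeff, constantCoeff_Ap]
  exact isUnit_one

lemma X_pow_dvd_prod_sub_one {s : Finset ℕ} {c : ℕ} (h : ∀ i ∈ s, c ≤ i + 1) :
    (X : PS) ^ c ∣ (∏ i ∈ s, (1 - X ^ (i+1))) - 1 := by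
  induction s using Finset.induction_on with
  | empty => simp
  | @insert j s hj ih =>
    rw [Finset.prod_insert hj]
    have hd : (∏ i ∈ s, (1 - (X:PS) ^ (i+1))) - 1
        = (∏ i ∈ s, (1 - (X:PS) ^ (i+1))) - 1 := rfl
    have h1 : (1 - (X:PS) ^ (j+1)) * (∏ i ∈ s, (1 - X ^ (i+1))) - 1
        = ((∏ i ∈ s, (1 - (X:PS) ^ (i+1))) - 1)
          - X ^ (j+1) * ∏ i ∈ s, (1 - X ^ (i+1)) := by ring
    rw [h1]
    apply dvd_sub
    · exact ih (fun i hi => h i (Finset.mem_insert_of_mem hi))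
    · exact Dvd.dvd.mul_right
        (pow_dvd_pow X (h j (Finset.mem_insert_self j s))) _

lemma Ap_sub_dvd {a b : ℕ} (hab : a ≤ b) : (X : PS) ^ (a+1) ∣ Ap b - Ap a := by
  have : Ap b = Ap a * ∏ i ∈ Finset.Ico a b, (1 - X ^ (i+1)) := by
    rw [Ap, Ap, Finset.range_eq_Ico, Finset.range_eq_Ico]
    exact (Finset.prod_Ico_consecutive (fun i => (1 - (X:PS) ^ (i+1))) (Nat.zero_le a) hab).symm
  rw [this]
  have h1 : Ap a * (∏ i ∈ Finset.Ico a b, (1 - (X:PS) ^ (i+1))) - Ap a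
      = Ap a * ((∏ i ∈ Finset.Ico a b, (1 - (X:PS) ^ (i+1))) - 1) := by ring
  rw [h1]
  apply Dvd.dvd.mul_left
  apply X_pow_dvd_prod_sub_one
  intro i hi
  have := (Finset.mem_Ico.mp hi).1
  omega

lemma Ap_sub_dvd' (a b : ℕ) : (X : PS) ^ (min a b + 1) ∣ Ap a - Ap b := by
  rcases le_total a b with h | h
  · rw [min_eq_left h, ← neg_sub]
    exact (Ap_sub_dvd h).neg_right
  · rw [min_eq_right h]
    exact Ap_sub_dvd h

lemma qb_sub_dvd {n j : ℕ} (hj : j ≤ 2*n) :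
    (X : PS) ^ (min j (2*n - j) + 1) ∣ qb X (2*n) j - qb X (2*n) n := by
  set d := min j (2*n - j) + 1 with hd
  have h1 : qb X (2*n) j * (Ap j * Ap (2*n - j)) = Ap (2*n) := by
    rw [← mul_assoc]; exact qb_mul X (2*n) j hj
  have h2 : qb X (2*n) n * (Ap n * Ap n) = Ap (2*n) := by
    have h := qb_mul (X : PS) (2*n) n (by omega)
    have e : 2*n - n = n := by omega
    rw [e] at h
    rw [← mul_assoc]
    exact h
  have hdvd : (X : PS) ^ d ∣ Ap n * Ap n - Ap j * Ap (2*n - j) := by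
    have e : Ap n * Ap n - Ap j * Ap (2*n - j)
        = Ap n * (Ap n - Ap (2*n - j)) + (Ap n - Ap j) * Ap (2*n - j) := by ring
    rw [e]
    apply dvd_add
    · apply Dvd.dvd.mul_left
      exact dvd_trans (pow_dvd_pow X (by omega : d ≤ min n (2*n-j) + 1)) (Ap_sub_dvd' n (2*n-j))
    · apply Dvd.dvd.mul_right
      exact dvd_trans (pow_dvd_pow X (by omega : d ≤ min n j + 1)) (Ap_sub_dvd' n j)
  have key : (qb X (2*n) j - qb X (2*n) n) * (Ap j * Ap (2*n - j))
      = qb X (2*n) n * (Ap n * Ap n - Ap j * Ap (2*n - j)) := by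
    rw [sub_mul, h1, ← h2, ← mul_sub]
  have hu : IsUnit (Ap j * Ap (2*n - j)) := (isUnit_Ap j).mul (isUnit_Ap (2*n-j))
  have : (X : PS) ^ d ∣ (qb X (2*n) j - qb X (2*n) n) * (Ap j * Ap (2*n - j)) := by
    rw [key]; exact hdvd.mul_left _
  exact (hu.dvd_mul_right).mp this
end Congruences



lemma sum_tri_sub_dvd (N : ℕ) :
    (X : PS) ^ (N+1) ∣
      (∑ j ∈ range (2*(N+1)+1), (X : PS) ^ (tri (N+1) j)) - 2 * triangularGF := by
  set n := N + 1 with hn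
  rw [PowerSeries.X_pow_dvd_iff]
  intro k hk
  rw [map_sub, map_sum]
  have hL : ∑ j ∈ range (2*n+1), (coeff k) ((X : PS) ^ (tri n j))
      = (((range (2*n+1)).filter (fun j => k = tri n j)).card : ℚ) := by
    rw [Finset.sum_congr rfl (fun j _ => coeff_X_pow k (tri n j)), Finset.sum_boole]
  have hR : (coeff k) (2 * triangularGF)
      = 2 * (((range (k+1)).filter (fun r => r * (r+1) = 2*k)).card : ℚ) := by
    rw [show (2 : PS) * triangularGF = triangularGF + triangularGF from by ring, map_add,
      triangularGF, coeff_mk]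
    ring
  rw [hL, hR]
  by_cases hex : ∃ r, tnum r = k
  · obtain ⟨r, hr⟩ := hex
    have hrk : r ≤ k := hr ▸ self_le_tnum r
    have hfl : (range (2*n+1)).filter (fun j => k = tri n j) = {n + r, n - r - 1} := by
      ext j
      simp only [Finset.mem_filter, Finset.mem_range, Finset.mem_insert, Finset.mem_singleton]
      constructor
      · rintro ⟨hjr, hjt⟩
        rcases le_or_gt n j with h | h
        · left
          have : tnum (j - n) = tnum r := by
            rw [tri, if_pos h] at hjt; omega
          have := tnum_strictMono.injective this
          omega
        · right
          have : tnum (n - j - 1) = tnum r := by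
            rw [tri, if_neg (by omega)] at hjt; omega
          have := tnum_strictMono.injective this
          omega
      · intro h
        rcases h with h | h
        · subst h
          constructor
          · omega
          · rw [tri, if_pos (by omega)]
            rw [show n + r - n = r by omega, hr]
        · subst h
          constructor
          · omega
          · rw [tri, if_neg (by omega)]
            rw [show n - (n - r - 1) - 1 = r by omega, hr]
    have hfr : (range (k+1)).filter (fun r' => r' * (r'+1) = 2*k) = {r} := by
      ext r'
      simp only [Finset.mem_filter, Finset.mem_range, Finset.mem_singleton]
      constructor
      · rintro ⟨_, h2⟩
        have : 2 * tnum r' = 2 * k := by rw [two_tnum]; omega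
        have : tnum r' = tnum r := by omega
        exact tnum_strictMono.injective this
      · rintro rfl
        refine ⟨by omega, ?_⟩
        rw [← two_tnum, hr]
    rw [hfl, hfr, Finset.card_insert_of_notMem (by simp; omega), Finset.card_singleton]
    norm_num
  · have hfl : (range (2*n+1)).filter (fun j => k = tri n j) = ∅ := by
      rw [Finset.filter_eq_empty_iff]
      intro j hj hjt
      rcases le_or_gt n j with h | h
      · exact hex ⟨j - n, by rw [tri, if_pos h] at hjt; omega⟩
      · exact hex ⟨n - j - 1, by rw [tri, if_neg (by omega)] at hjt; omega⟩
    have hfr : (range (k+1)).filter (fun r' => r' * (r'+1) = 2*k) = ∅ := by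
      rw [Finset.filter_eq_empty_iff]
      intro r' _ h2
      refine hex ⟨r', ?_⟩
      have := two_tnum r'
      omega
    rw [hfl, hfr]
    simp

lemma Ap_mul_Bp (a : ℕ) : Ap a * Bp a = Cp a := by
  rw [Ap, Bp, Cp, ← Finset.prod_mul_distrib]
  apply Finset.prod_congr rfl
  intro i _
  have : (X : PS) ^ (2*(i+1)) = (X ^ (i+1)) ^ 2 := by
    rw [← pow_mul]; ring_nf
  rw [this]; ring

lemma tri_min_ineq (N j : ℕ) (hj : j ≤ 2*(N+1)) :
    N + 1 ≤ tri (N+1) j + (min j (2*(N+1) - j) + 1) := by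
  set n := N + 1 with hn
  rcases le_or_gt n j with h | h
  · rw [tri, if_pos h]
    have := self_le_tnum (j - n)
    omega
  · rw [tri, if_neg (by omega)]
    have := self_le_tnum (n - j - 1)
    omega

lemma main_dvd (N : ℕ) :
    (X : PS) ^ (N+1) ∣ Ap (N+1) * triangularGF - Cp (N+1) * Cp (N+1) := by
  set n := N + 1 with hn
  have hPI := PI N
  set S := ∑ j ∈ range (2*n+1), (X : PS) ^ (tri n j) * qb X (2*n) j with hS
  set Sig := ∑ j ∈ range (2*n+1), (X : PS) ^ (tri n j) with hSig
  -- step 1 : X^n ∣ S - qb X (2n) n * Sig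
  have h1 : (X : PS) ^ n ∣ S - qb X (2*n) n * Sig := by
    rw [hS, hSig, Finset.mul_sum, ← Finset.sum_sub_distrib]
    apply Finset.dvd_sum
    intro j hj
    have hj2 : j ≤ 2*n := by
      have := Finset.mem_range.mp hj; omega
    have e : (X : PS) ^ (tri n j) * qb X (2*n) j - qb X (2*n) n * X ^ (tri n j)
        = X ^ (tri n j) * (qb X (2*n) j - qb X (2*n) n) := by ring
    rw [e]
    have hd := qb_sub_dvd (n := n) hj2
    have : (X : PS) ^ (tri n j) * X ^ (min j (2*n - j) + 1)
        ∣ X ^ (tri n j) * (qb X (2*n) j - qb X (2*n) n) := mul_dvd_mul_left _ hd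
    refine dvd_trans ?_ this
    rw [← pow_add]
    exact pow_dvd_pow X (tri_min_ineq N j hj2)
  -- step 2 : X^n ∣ Sig - 2Δ
  have h2 : (X : PS) ^ n ∣ Sig - 2 * triangularGF := sum_tri_sub_dvd N
  -- combine
  have h3 : (X : PS) ^ n ∣ S - qb X (2*n) n * (2 * triangularGF) := by
    have e : S - qb X (2*n) n * (2 * triangularGF)
        = (S - qb X (2*n) n * Sig) + qb X (2*n) n * (Sig - 2 * triangularGF) := by ring
    rw [e]
    exact dvd_add h1 (h2.mul_left _)
  rw [hPI] at h3
  -- ∏ (1 + X^i) over range n = 2 * Bp N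
  have hB' : (∏ i ∈ range n, (1 + (X : PS) ^ i)) = 2 * Bp N := by
    rw [hn, Finset.prod_range_succ' (fun i => 1 + (X : PS) ^ i) N, Bp]
    norm_num [mul_comm]
  rw [hB'] at h3
  rw [show (∏ i ∈ range (N+1), (1 + (X:PS) ^ (i+1))) = Bp n from rfl] at h3
  have h4 : (X : PS) ^ n ∣ Bp n * Bp N - qb X (2*n) n * triangularGF := by
    have e : Bp n * (2 * Bp N) - qb X (2*n) n * (2 * triangularGF)
        = (Bp n * Bp N - qb X (2*n) n * triangularGF) * 2 := by ring
    rw [e] at h3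
    have hu : IsUnit (2 : PS) := by
      rw [PowerSeries.isUnit_iff_constantCoeff, map_ofNat]
      norm_num
    exact hu.dvd_mul_right.mp h3
  -- multiply by Ap n * Ap n
  have h5 : (X : PS) ^ n ∣
      (Bp n * Bp N - qb X (2*n) n * triangularGF) * (Ap n * Ap n) := (h4.mul_right _)
  have hqA : qb X (2*n) n * (Ap n * Ap n) = Ap (2*n) := by
    have h := qb_mul (X : PS) (2*n) n (by omega)
    have e : 2*n - n = n := by omega
    rw [e] at h
    rw [← mul_assoc]
    exact h
  have hApn : Ap n = Ap N * (1 - (X:PS) ^ n) := by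
    rw [hn, Ap, Ap, Finset.prod_range_succ]
  have e5 : (Bp n * Bp N - qb X (2*n) n * triangularGF) * (Ap n * Ap n)
      = Cp n * Cp N * (1 - X^n) - Ap (2*n) * triangularGF := by
    rw [sub_mul]
    congr 1
    · calc Bp n * Bp N * (Ap n * Ap n)
          = (Ap n * Bp n) * (Bp N * Ap n) := by ring
        _ = Cp n * (Bp N * (Ap N * (1 - X^n))) := by rw [Ap_mul_Bp, hApn]
        _ = Cp n * ((Ap N * Bp N) * (1 - X^n)) := by ring
        _ = Cp n * Cp N * (1 - X^n) := by rw [Ap_mul_Bp]; ring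
    · rw [mul_comm (qb X (2*n) n) triangularGF, mul_assoc, hqA, mul_comm]
  rw [e5] at h5
  -- final adjustments
  have h6 : (X : PS) ^ n ∣ Cp n * Cp N - Ap (2*n) * triangularGF := by
    have e : Cp n * Cp N - Ap (2*n) * triangularGF
        = (Cp n * Cp N * (1 - X^n) - Ap (2*n) * triangularGF)
          + X^n * (Cp n * Cp N) := by ring
    rw [e]
    exact dvd_add h5 (Dvd.dvd.mul_right dvd_rfl _)
  have h7 : (X : PS) ^ n ∣ Cp n * Cp n - Ap (2*n) * triangularGF := by
    have hCpn : Cp n = Cp N * (1 - (X:PS) ^ (2*n)) := by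
      rw [hn, Cp, Cp, Finset.prod_range_succ]
    have e : Cp n * Cp n - Ap (2*n) * triangularGF
        = (Cp n * Cp N - Ap (2*n) * triangularGF) - X^(2*n) * (Cp n * Cp N) := by
      rw [hCpn]; ring
    rw [e]
    refine dvd_sub h6 (Dvd.dvd.mul_right ?_ _)
    exact pow_dvd_pow X (by omega)
  have h8 : (X : PS) ^ n ∣ Ap (2*n) * triangularGF - Ap n * triangularGF := by
    have : Ap (2*n) * triangularGF - Ap n * triangularGF
        = (Ap (2*n) - Ap n) * triangularGF := by ring
    rw [this]
    refine Dvd.dvd.mul_right ?_ _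
    exact dvd_trans (pow_dvd_pow X (by omega)) (Ap_sub_dvd (by omega))
  have e : Ap n * triangularGF - Cp n * Cp n
      = -((Cp n * Cp n - Ap (2*n) * triangularGF)
          + (Ap (2*n) * triangularGF - Ap n * triangularGF)) := by ring
  rw [e]
  exact (dvd_add h7 h8).neg_right

/-- Gauss' identity `∑_{n≥0} q^{n(n+1)/2} = ∏_{n≥1}(1-q^{2n})²/(1-q^n)`, stated
coefficientwise after clearing denominators: for each `N`, the `q^N`-coefficient of
`∏_{n≥1}(1-q^n) · Δ(q)` equals that of `∏_{n≥1}(1-q^{2n})²` (the products may be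
truncated at `n = N+1` without affecting the `q^N`-coefficient). -/
theorem gauss_triangular_identity (N : ℕ) :
    PowerSeries.coeff N
        ((∏ i ∈ Finset.range (N + 1), (1 - (PowerSeries.X : PowerSeries ℚ) ^ (i + 1)))
          * triangularGF)
      = PowerSeries.coeff N
        (∏ i ∈ Finset.range (N + 1),
          (1 - (PowerSeries.X : PowerSeries ℚ) ^ (2 * (i + 1))) ^ 2) := by
  have h := main_dvd N
  rw [PowerSeries.X_pow_dvd_iff] at h
  have h2 := h N (by omega)
  rw [map_sub, sub_eq_zero] at h2
  have eL : Ap (N+1) = ∏ i ∈ Finset.range (N + 1), (1 - (PowerSeries.X : PowerSeries ℚ) ^ (i + 1)) := rfl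
  have eR : (∏ i ∈ Finset.range (N + 1),
      (1 - (PowerSeries.X : PowerSeries ℚ) ^ (2 * (i + 1))) ^ 2) = Cp (N+1) * Cp (N+1) := by
    rw [Finset.prod_pow, Cp, sq]
  rw [← eL, eR]
  exact h2
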